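/- Let λ>1 be an integer, j ≥ 0, ℓ ∈ ℤ. Let D_λ := diag(1, λ), S^ℓ := [[1,ℓ],[0,1]], S_ℓ := (S^ℓ)^T, B := diag(λ^{-2}, λ^{-1}), N := λ^{-2}I₂. Suppose ψ̃, ψ : ℝ² → ℂ are measurable with ψ(ξ) = ψ̃(D_λ^{-j} S_{-ℓ} ξ) for all ξ. Then for every k ∈ ℤ², |det(S_ℓ B^j)|^{1/2} ψ(S_ℓ B^j ξ) e^{-i k·S_ℓ B^j ξ} = λ^{j/2} |det N^j|^{1/2} ψ̃(N^j ξ) e^{-i (D_λ^j S^ℓ k)·N^j ξ}, i.e., ψ_{S_ℓ B^j; 0, k} = λ^{j/2} ψ̃_{N^j; 0, D_λ^j S^ℓ k}. Moreover D_λ^j S^ℓ ℤ² ⊆ ℤ². -/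

import Mathlib

open Matrix

lemma diag_pow (a b : ℝ) (j : ℕ) : !![a,0;0,b] ^ j = !![a ^ j,0;0,b ^ j] := by
  induction j with
  | zero => simp [Matrix.one_fin_two]
  | succ n ih =>
    rw [pow_succ, ih, Matrix.mul_fin_two]
    norm_num [pow_succ]

/-- For integer `λ > 1`, each sheared atom `ψ_{S_ℓ B^j;0,k}` equals
`λ^{j/2} ψ̃_{N^j;0,D_λ^j S^ℓ k}`, and `D_λ^j S^ℓ ℤ² ⊆ ℤ²`; i.e. the affine
shear tight frame is a subsampled directional framelet. -/
theorem shear_subsampled_framelet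
    (lamZ : ℤ) (hlamZ : 1 < lamZ) (lam : ℝ) (hlam : lam = (lamZ : ℝ))
    (j : ℕ) (ℓ : ℤ)
    (Dlam Sup Slo B N : Matrix (Fin 2) (Fin 2) ℝ)
    (hD : Dlam = !![1, 0; 0, lam])
    (hSup : Sup = !![1, (ℓ : ℝ); 0, 1])
    (hSlo : Slo = Supᵀ)
    (hB : B = !![(lam ^ 2)⁻¹, 0; 0, lam⁻¹])
    (hN : N = !![(lam ^ 2)⁻¹, 0; 0, (lam ^ 2)⁻¹])
    (ψt ψ : (Fin 2 → ℝ) → ℂ)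
    (hψ : ∀ ξ, ψ ξ =
      ψt ((!![1, 0; 0, lam⁻¹] ^ j).mulVec ((!![1, 0; -(ℓ : ℝ), 1]).mulVec ξ))) :
    (∀ (k : Fin 2 → ℤ) (ξ : Fin 2 → ℝ),
      (Real.sqrt |(Slo * B ^ j).det| : ℂ) * ψ ((Slo * B ^ j).mulVec ξ) *
          Complex.exp (-Complex.I *
            ((∑ i, (k i : ℝ) * (Slo * B ^ j).mulVec ξ i : ℝ) : ℂ)) =
      (Real.sqrt (lam ^ j) : ℂ) *
        ((Real.sqrt |(N ^ j).det| : ℂ) * ψt ((N ^ j).mulVec ξ) *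
          Complex.exp (-Complex.I *
            ((∑ i, (Dlam ^ j * Sup).mulVec (fun i' => (k i' : ℝ)) i *
              (N ^ j).mulVec ξ i : ℝ) : ℂ)))) ∧
    ∀ k : Fin 2 → ℤ, ∃ m : Fin 2 → ℤ,
      (Dlam ^ j * Sup).mulVec (fun i => (k i : ℝ)) = fun i => (m i : ℝ) := by
  have hl0 : (0:ℝ) < lam := by rw [hlam]; exact_mod_cast hlamZ.trans' one_pos
  have hlne : lam ≠ 0 := ne_of_gt hl0
  have hSlo' : Slo = !![1, 0; (ℓ:ℝ), 1] := by
    rw [hSlo, hSup]; ext i j; fin_cases i <;> fin_cases j <;> simp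
  subst hD hSup hB hN
  simp only [diag_pow] at hψ ⊢
  rw [hSlo']
  constructor
  · intro k ξ
    -- explicit product matrices
    have hSB : !![1, 0; (ℓ:ℝ), 1] * !![((lam^2)⁻¹)^j, 0; 0, (lam⁻¹)^j]
        = !![((lam^2)⁻¹)^j, 0; (ℓ:ℝ) * ((lam^2)⁻¹)^j, (lam⁻¹)^j] := by
      rw [Matrix.mul_fin_two]; norm_num
    have hDS : !![(1:ℝ)^j, 0; 0, lam^j] * !![1, (ℓ:ℝ); 0, 1]
        = !![1, (ℓ:ℝ); 0, lam^j] := by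
      rw [Matrix.mul_fin_two]; norm_num
    rw [hSB, hDS, hψ]
    have hdet1 : |(!![((lam^2)⁻¹)^j, 0; (ℓ:ℝ) * ((lam^2)⁻¹)^j, (lam⁻¹)^j]).det|
        = (lam⁻¹ ^ j)^3 := by
      rw [Matrix.det_fin_two_of]; simp only [zero_mul, mul_zero, sub_zero]
      rw [abs_of_nonneg (by positivity)]
      field_simp; ring
    have hdet2 : |(!![((lam^2)⁻¹)^j, 0; 0, ((lam^2)⁻¹)^j]).det| = (lam⁻¹ ^ j)^4 := by
      rw [Matrix.det_fin_two_of]; simp only [zero_mul, mul_zero, sub_zero]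
      rw [abs_of_nonneg (by positivity)]
      field_simp; ring
    rw [hdet1, hdet2]
    have hsqrt : Real.sqrt ((lam⁻¹ ^ j)^3) = Real.sqrt (lam^j) * Real.sqrt ((lam⁻¹ ^ j)^4) := by
      rw [← Real.sqrt_mul (by positivity)]
      congr 1
      field_simp; ring_nf; rw [← mul_pow, mul_inv_cancel₀ hlne, one_pow]
    -- argument of ψt
    have harg : (!![(1:ℝ)^j, 0; 0, (lam⁻¹)^j]).mulVec
        ((!![1, 0; -(ℓ : ℝ), 1]).mulVec
          ((!![((lam^2)⁻¹)^j, 0; (ℓ:ℝ) * ((lam^2)⁻¹)^j, (lam⁻¹)^j]).mulVec ξ))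
        = (!![((lam^2)⁻¹)^j, 0; 0, ((lam^2)⁻¹)^j]).mulVec ξ := by
      funext i
      fin_cases i <;>
        simp [Matrix.mulVec, dotProduct, Fin.sum_univ_two] <;>
        · field_simp; ring
    rw [harg]
    have hsum : (∑ i, (k i : ℝ) *
          (!![((lam^2)⁻¹)^j, 0; (ℓ:ℝ) * ((lam^2)⁻¹)^j, (lam⁻¹)^j]).mulVec ξ i)
        = ∑ i, (!![(1:ℝ), (ℓ:ℝ); 0, lam^j]).mulVec (fun i' => (k i' : ℝ)) i *
              (!![((lam^2)⁻¹)^j, 0; 0, ((lam^2)⁻¹)^j]).mulVec ξ i := by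
      simp only [Matrix.mulVec, dotProduct, Fin.sum_univ_two]
      simp [Fin.sum_univ_two, Matrix.cons_val_zero, Matrix.cons_val_one]
      field_simp; ring
    rw [hsum, hsqrt]
    push_cast
    ring
  · intro k
    refine ⟨![k 0 + ℓ * k 1, lamZ ^ j * k 1], ?_⟩
    have hDS : !![(1:ℝ)^j, 0; 0, lam^j] * !![1, (ℓ:ℝ); 0, 1]
        = !![1, (ℓ:ℝ); 0, lam^j] := by
      rw [Matrix.mul_fin_two]; norm_num
    rw [hDS]
    funext i
    fin_cases i <;>
      simp [Matrix.mulVec, dotProduct, Fin.sum_univ_two, hlam] <;> push_cast <;> ring
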